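/- Let D and D' be division rings, let m, n, m', n' ≥ 2 be integers, and let φ : D^{m×n} → D'^{m'×n'} be a graph homomorphism with φ(0) = 0. Let A, B ∈ D^{m×n}. If A ≤ B in the minus partial order and rank(φ(B)) = rank(B), then φ(A) ≤ φ(B) and rank(φ(A)) = rank(A). -/

import Mathlib

open Matrix Function

/-- The rank of a matrix over a division ring: the dimension of its left row space. -/
noncomputable def rk {D : Type*} [DivisionRing D] {m n : ℕ}
    (A : Matrix (Fin m) (Fin n) D) : ℕ :=
  Module.finrank D (Submodule.span D (Set.range fun i => A i))

/-- A nonempty set of matrices, any two distinct members of which are adjacent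
(`rk (A - B) = 1`). -/
def IsAdjSet {D : Type*} [DivisionRing D] {m n : ℕ}
    (S : Set (Matrix (Fin m) (Fin n) D)) : Prop :=
  S.Nonempty ∧ ∀ A ∈ S, ∀ B ∈ S, A ≠ B → rk (A - B) = 1

/-- A maximal set: an adjacent set which is maximal under inclusion. -/
def IsMaxSet {D : Type*} [DivisionRing D] {m n : ℕ}
    (S : Set (Matrix (Fin m) (Fin n) D)) : Prop :=
  IsAdjSet S ∧ ∀ T : Set (Matrix (Fin m) (Fin n) D), IsAdjSet T → S ⊆ T → T = S

/-- `M₁`: matrices whose rows other than the first are zero. -/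
def M1set (D : Type*) [DivisionRing D] (m n : ℕ) : Set (Matrix (Fin m) (Fin n) D) :=
  {X | ∀ (i : Fin m) (j : Fin n), (i : ℕ) ≠ 0 → X i j = 0}

/-- `N₁`: matrices whose columns other than the first are zero. -/
def N1set (D : Type*) [DivisionRing D] (m n : ℕ) : Set (Matrix (Fin m) (Fin n) D) :=
  {X | ∀ (i : Fin m) (j : Fin n), (j : ℕ) ≠ 0 → X i j = 0}

/-- A maximal set of type one: `P·M₁ + A` with `P` invertible. -/
def IsTypeOne {D : Type*} [DivisionRing D] {m n : ℕ}
    (S : Set (Matrix (Fin m) (Fin n) D)) : Prop :=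
  ∃ (P : Matrix (Fin m) (Fin m) D) (A : Matrix (Fin m) (Fin n) D),
    IsUnit P ∧ S = (fun X => P * X + A) '' M1set D m n

/-- A maximal set of type two: `N₁·Q + A` with `Q` invertible. -/
def IsTypeTwo {D : Type*} [DivisionRing D] {m n : ℕ}
    (S : Set (Matrix (Fin m) (Fin n) D)) : Prop :=
  ∃ (Q : Matrix (Fin n) (Fin n) D) (A : Matrix (Fin m) (Fin n) D),
    IsUnit Q ∧ S = (fun X => X * Q + A) '' N1set D m n

/-- Two maximal sets of different types. -/
def DiffTypes {D : Type*} [DivisionRing D] {m n : ℕ}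
    (M N : Set (Matrix (Fin m) (Fin n) D)) : Prop :=
  (IsTypeOne M ∧ IsTypeTwo N) ∨ (IsTypeTwo M ∧ IsTypeOne N)

/-- The unit ball `B_A = D^{m×n}_{≤1} + A`. -/
def uball {D : Type*} [DivisionRing D] {m n : ℕ}
    (A : Matrix (Fin m) (Fin n) D) : Set (Matrix (Fin m) (Fin n) D) :=
  {X | rk (X - A) ≤ 1}

/-- A graph homomorphism: adjacency-preserving map. -/
def IsGraphHom {D D' : Type*} [DivisionRing D] [DivisionRing D'] {m n m' n' : ℕ}
    (φ : Matrix (Fin m) (Fin n) D → Matrix (Fin m') (Fin n') D') : Prop :=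
  ∀ A B, rk (A - B) = 1 → rk (φ A - φ B) = 1

/-- A degenerate graph homomorphism. -/
def Degenerate {D D' : Type*} [DivisionRing D] [DivisionRing D'] {m n m' n' : ℕ}
    (φ : Matrix (Fin m) (Fin n) D → Matrix (Fin m') (Fin n') D') : Prop :=
  ∃ (A : Matrix (Fin m) (Fin n) D) (M N : Set (Matrix (Fin m') (Fin n') D')),
    rk A ≤ 1 ∧ DiffTypes M N ∧ φ '' uball A ⊆ M ∪ N ∧ φ A ∈ M ∩ N

/-- A (vertex) colouring: the image is an adjacent set. -/
def IsColouring {D D' : Type*} [DivisionRing D] [DivisionRing D'] {m n m' n' : ℕ}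
    (φ : Matrix (Fin m) (Fin n) D → Matrix (Fin m') (Fin n') D') : Prop :=
  IsAdjSet (Set.range φ)

/-- A nonzero ring homomorphism. -/
def IsRingHomNZ {D D' : Type*} [DivisionRing D] [DivisionRing D'] (τ : D → D') : Prop :=
  (∀ x y, τ (x + y) = τ x + τ y) ∧ (∀ x y, τ (x * y) = τ x * τ y) ∧ τ ≠ 0

/-- A nonzero ring anti-homomorphism. -/
def IsAntiRingHomNZ {D D' : Type*} [DivisionRing D] [DivisionRing D'] (σ : D → D') : Prop :=
  (∀ x y, σ (x + y) = σ x + σ y) ∧ (∀ x y, σ (x * y) = σ y * σ x) ∧ σ ≠ 0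

/-- The `m × n` matrix with the matrix `Y` in the upper-left corner and zeros elsewhere. -/
def corner {D : Type*} [Zero D] {k l m n : ℕ} (Y : Matrix (Fin k) (Fin l) D) :
    Matrix (Fin m) (Fin n) D :=
  Matrix.of fun i j =>
    if hi : (i : ℕ) < k then if hj : (j : ℕ) < l then Y ⟨i, hi⟩ ⟨j, hj⟩ else 0 else 0

/-- A line of the affine geometry `AG(M)` of a maximal set `M`: a nonempty intersection
`M ∩ N` with `N` a maximal set of the other type. -/
def IsLine {D : Type*} [DivisionRing D] {m n : ℕ}
    (M ℓ : Set (Matrix (Fin m) (Fin n) D)) : Prop :=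
  ∃ N : Set (Matrix (Fin m) (Fin n) D), DiffTypes M N ∧ (M ∩ N).Nonempty ∧ ℓ = M ∩ N

/-- Condition (I). -/
def CondI {D D' : Type*} [DivisionRing D] [DivisionRing D'] {m n m' n' : ℕ}
    (φ : Matrix (Fin m) (Fin n) D → Matrix (Fin m') (Fin n') D') : Prop :=
  ∀ M N : Set (Matrix (Fin m) (Fin n) D), DiffTypes M N → (0 : Matrix (Fin m) (Fin n) D) ∈ M ∩ N →
    ∃ M' N' : Set (Matrix (Fin m') (Fin n') D'),
      DiffTypes M' N' ∧ φ '' M ⊆ M' ∧ φ '' N ⊆ N'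

/-- Condition (i) of the additive homomorphism theorem: `φ(X) = P X^τ Q`. -/
def Cond1 {D D' : Type*} [DivisionRing D] [DivisionRing D'] {m n m' n' : ℕ}
    (φ : Matrix (Fin m) (Fin n) D → Matrix (Fin m') (Fin n') D') : Prop :=
  ∃ (P : Matrix (Fin m') (Fin m) D') (Q : Matrix (Fin n) (Fin n') D') (τ : D → D'),
    2 ≤ rk P ∧ 2 ≤ rk Q ∧ IsRingHomNZ τ ∧ ∀ X, φ X = P * X.map τ * Q

/-- Condition (ii) of the additive homomorphism theorem: `φ(X) = P (ᵗX^σ) Q`. -/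
def Cond2 {D D' : Type*} [DivisionRing D] [DivisionRing D'] {m n m' n' : ℕ}
    (φ : Matrix (Fin m) (Fin n) D → Matrix (Fin m') (Fin n') D') : Prop :=
  ∃ (P : Matrix (Fin m') (Fin n) D') (Q : Matrix (Fin m) (Fin n') D') (σ : D → D'),
    2 ≤ rk P ∧ 2 ≤ rk Q ∧ IsAntiRingHomNZ σ ∧ ∀ X, φ X = P * (X.map σ)ᵀ * Q


section stmt16aux
variable {D : Type*} [DivisionRing D] {m n : ℕ}

private lemma rk_zero' : rk (0 : Matrix (Fin m) (Fin n) D) = 0 := by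
  have : Submodule.span D (Set.range fun i => (0 : Matrix (Fin m) (Fin n) D) i) = ⊥ := by
    rw [Submodule.span_eq_bot]
    rintro x ⟨i, rfl⟩
    rfl
  rw [rk, this, finrank_bot]

private lemma rk_eq_zero_iff' {C : Matrix (Fin m) (Fin n) D} : rk C = 0 ↔ C = 0 := by
  constructor
  · intro h
    have hb : Submodule.span D (Set.range fun i => C i) = ⊥ := by
      rw [← Submodule.finrank_eq_zero]
      exact h
    ext i j
    have : C i ∈ (⊥ : Submodule D (Fin n → D)) := by
      rw [← hb]; exact Submodule.subset_span ⟨i, rfl⟩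
    have := Submodule.mem_bot _ |>.mp this
    simp [congrFun this j]
  · rintro rfl; exact rk_zero'

private lemma rk_add_le' (X Y : Matrix (Fin m) (Fin n) D) : rk (X + Y) ≤ rk X + rk Y := by
  have hle : Submodule.span D (Set.range fun i => (X + Y) i) ≤
      Submodule.span D (Set.range fun i => X i) ⊔ Submodule.span D (Set.range fun i => Y i) := by
    rw [Submodule.span_le]
    rintro v ⟨i, rfl⟩
    exact Submodule.add_mem_sup (Submodule.subset_span ⟨i, rfl⟩) (Submodule.subset_span ⟨i, rfl⟩)
  calc rk (X + Y) ≤ Module.finrank D ((Submodule.span D (Set.range fun i => X i)) ⊔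
        (Submodule.span D (Set.range fun i => Y i)) : Submodule D (Fin n → D)) :=
        Submodule.finrank_mono hle
    _ ≤ rk X + rk Y := Submodule.finrank_add_le_finrank_add_finrank _ _

private lemma rk_le_of_rows_mem' {C : Matrix (Fin m) (Fin n) D} {W : Submodule D (Fin n → D)}
    [Module.Finite D W] (h : ∀ i, C i ∈ W) : rk C ≤ Module.finrank D W := by
  apply Submodule.finrank_mono
  rw [Submodule.span_le]
  rintro v ⟨i, rfl⟩
  exact h i

private lemma rk_split' {C : Matrix (Fin m) (Fin n) D} {d : ℕ} (h : rk C = d + 1) :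
    ∃ Z : Matrix (Fin m) (Fin n) D, rk (C - Z) = 1 ∧ rk Z = d := by
  set W := Submodule.span D (Set.range fun i => C i) with hWdef
  have hW : Module.finrank D W = d + 1 := h
  let b : Module.Basis (Fin (d+1)) D W := Module.finBasisOfFinrankEq D W hW
  have hmem : ∀ i, C i ∈ W := fun i => Submodule.subset_span ⟨i, rfl⟩
  set c : Fin m → Fin (d+1) → D := fun i k => b.repr ⟨C i, hmem i⟩ k with hc
  set Z : Matrix (Fin m) (Fin n) D := Matrix.of fun i =>
    ∑ k : Fin d, c i k.castSucc • ((b k.castSucc : W) : Fin n → D) with hZ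
  have hrow : ∀ i, C i = ∑ k : Fin (d+1), c i k • ((b k : W) : Fin n → D) := by
    intro i
    have h1 := b.sum_repr ⟨C i, hmem i⟩
    have h2 := congrArg (W.subtype) h1
    simp only [map_sum, LinearMap.map_smul, Submodule.subtype_apply] at h2
    exact h2.symm
  have hCZ : ∀ i, (C - Z) i = c i (Fin.last d) • ((b (Fin.last d) : W) : Fin n → D) := by
    intro i
    have : (C - Z) i = C i - Z i := rfl
    rw [this, hrow i, Fin.sum_univ_castSucc]
    simp only [hZ, Matrix.of_apply]
    exact add_sub_cancel_left _ _
  have h1 : rk (C - Z) ≤ 1 := by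
    have : rk (C - Z) ≤ Module.finrank D
        (Submodule.span D {((b (Fin.last d) : W) : Fin n → D)}) := by
      apply rk_le_of_rows_mem'
      intro i
      rw [hCZ i]
      exact Submodule.smul_mem _ _ (Submodule.mem_span_singleton_self _)
    refine this.trans ?_
    by_cases hv : ((b (Fin.last d) : W) : Fin n → D) = 0
    · rw [hv, Submodule.span_zero_singleton, finrank_bot]
      exact Nat.zero_le 1
    · rw [finrank_span_singleton hv]
  have h2 : rk Z ≤ d := by
    have : rk Z ≤ Module.finrank D (Submodule.span D
        (Set.range fun k : Fin d => ((b k.castSucc : W) : Fin n → D))) := by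
      apply rk_le_of_rows_mem'
      intro i
      show (∑ k : Fin d, c i k.castSucc • ((b k.castSucc : W) : Fin n → D)) ∈ _
      exact Submodule.sum_mem _ fun k _ =>
        Submodule.smul_mem _ _ (Submodule.subset_span (Set.mem_range_self k))
    refine this.trans ?_
    simpa [Set.finrank] using finrank_range_le_card (fun k : Fin d => ((b k.castSucc : W) : Fin n → D))
  have h3 : d + 1 ≤ rk Z + rk (C - Z) := by
    have : rk C ≤ rk Z + rk (C - Z) := by
      have := rk_add_le' Z (C - Z)
      simpa using this
    omega
  exact ⟨Z, by omega, by omega⟩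

private lemma rk_contract' {D' : Type*} [DivisionRing D'] {m' n' : ℕ}
    (φ : Matrix (Fin m) (Fin n) D → Matrix (Fin m') (Fin n') D')
    (hhom : IsGraphHom φ) :
    ∀ (d : ℕ) (X Y : Matrix (Fin m) (Fin n) D), rk (X - Y) = d → rk (φ X - φ Y) ≤ d := by
  intro d
  induction d with
  | zero =>
    intro X Y h
    have hXY : X = Y := sub_eq_zero.mp (rk_eq_zero_iff'.mp h)
    rw [hXY, sub_self, rk_zero']
  | succ d ih =>
    intro X Y h
    obtain ⟨Z', hZ1, hZ2⟩ := rk_split' h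
    have h1 : rk (X - (Y + Z')) = 1 := by
      have : X - (Y + Z') = (X - Y) - Z' := by abel
      rw [this]; exact hZ1
    have h2 : rk ((Y + Z') - Y) = d := by
      have : (Y + Z') - Y = Z' := by abel
      rw [this]; exact hZ2
    have hadj := hhom X (Y + Z') h1
    have hrest := ih (Y + Z') Y h2
    have hsum : rk (φ X - φ Y) ≤ rk (φ X - φ (Y + Z')) + rk (φ (Y + Z') - φ Y) := by
      have : φ X - φ Y = (φ X - φ (Y + Z')) + (φ (Y + Z') - φ Y) := by abel
      rw [this]; exact rk_add_le' _ _
    omega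

end stmt16aux

/-- (Corollary `mYR25HLLsad23`) a graph homomorphism with `φ(0) = 0`
preserves the minus order below rank-preserved points. The minus order `A ≤ B` is
expressed as `rk (B - A) + rk A = rk B`. -/
theorem stmt16 {D D' : Type*} [DivisionRing D] [DivisionRing D'] {m n m' n' : ℕ}
    (hm : 2 ≤ m) (hn : 2 ≤ n) (hm' : 2 ≤ m') (hn' : 2 ≤ n')
    (φ : Matrix (Fin m) (Fin n) D → Matrix (Fin m') (Fin n') D')
    (hhom : IsGraphHom φ) (h0 : φ 0 = 0)
    (A B : Matrix (Fin m) (Fin n) D)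
    (hAB : rk (B - A) + rk A = rk B)
    (hB : rk (φ B) = rk B) :
    (rk (φ B - φ A) + rk (φ A) = rk (φ B)) ∧ rk (φ A) = rk A := by
  have hc1 : rk (φ B - φ A) ≤ rk (B - A) := rk_contract' φ hhom _ B A rfl
  have hc2 : rk (φ A) ≤ rk A := by
    have := rk_contract' φ hhom (rk (A - 0)) A 0 rfl
    simpa [h0] using this
  have htri : rk (φ B) ≤ rk (φ B - φ A) + rk (φ A) := by
    have heq : φ B = (φ B - φ A) + φ A := by abel
    calc rk (φ B) = rk ((φ B - φ A) + φ A) := by rw [← heq]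
      _ ≤ _ := rk_add_le' _ _
  omega
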